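/- In U_q^−(g) for a symmetrizable Kac-Moody algebra (q not a root of unity), for every Chevalley generator F_i and every element b ∈ U_q^−(g), there exists N_0 such that for all N ≥ N_0, F_i^N b ∈ U_q^−(g)·F_i (i.e., F_i^N b lies in the left ideal generated by F_i). -/

import Mathlib

noncomputable section
open FreeAlgebra

/-- The q-number `[m]_d = (1 - q^{2md})/(1 - q^{2d})`. -/
def qNum (q : ℂ) (d : ℤ) (m : ℤ) : ℂ := (1 - q ^ (2 * m * d)) / (1 - q ^ (2 * d))

/-- The q-factorial `[j]_d!`. -/
def qFact (q : ℂ) (d : ℤ) : ℕ → ℂ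
  | 0 => 1
  | (j + 1) => qNum q d (j + 1) * qFact q d j

/-- The Gaussian binomial coefficient `qbinom(n, ν; d)`. -/
def qBinom (q : ℂ) (d : ℤ) (n : ℤ) (ν : ℕ) : ℂ :=
  (∏ s ∈ Finset.range ν, qNum q d (n - s)) / qFact q d ν

/-- The quantum Serre relations defining `U_q⁻(g)` for a symmetrizable generalized Cartan
matrix `a` symmetrized by `d`. -/
inductive SerreRelG (n : ℕ) (a : Fin n → Fin n → ℤ) (d : Fin n → ℤ) (q : ℂ) :
    FreeAlgebra ℂ (Fin n) → FreeAlgebra ℂ (Fin n) → Prop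
  | serre (i j : Fin n) (h : i ≠ j) : SerreRelG n a d q
      (∑ ν ∈ Finset.range ((1 - a i j).toNat + 1),
        ((-1 : ℂ) ^ ν * (q ^ d i) ^ ((ν : ℤ) * ((ν : ℤ) - 1 + a i j)) *
            qBinom q (d i) (1 - a i j) ν) •
          (ι ℂ i ^ ((1 - a i j).toNat - ν) * ι ℂ j * ι ℂ i ^ ν)) 0

/-- `U_q⁻(g)`. -/
abbrev UqMinusG (n : ℕ) (a : Fin n → Fin n → ℤ) (d : Fin n → ℤ) (q : ℂ) :=
  RingQuot (SerreRelG n a d q)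

def fgenG (n : ℕ) (a : Fin n → Fin n → ℤ) (d : Fin n → ℤ) (q : ℂ) (i : Fin n) :
    UqMinusG n a d q :=
  RingQuot.mkAlgHom ℂ (SerreRelG n a d q) (ι ℂ i)

/-! ### Auxiliary generic lemmas

We carry out all computations in an arbitrary `ℂ`-algebra, to avoid `RingQuot`
instance-diamond issues with `rw`/`simp`, and only transfer the results to
`U_q⁻(g)` via definitional equality (`exact`). -/

section Generic

variable {A : Type*} [Ring A] [Algebra ℂ A]

lemma gen_pow_mem (u : A) (k t : ℕ) (h : k ≤ t) :
    u ^ t ∈ Submodule.span A {u ^ k} := by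
  rw [Submodule.mem_span_singleton]
  exact ⟨u ^ (t - k), by rw [smul_eq_mul, ← pow_add, Nat.sub_add_cancel h]⟩

lemma gen_span_le (u : A) (k t : ℕ) (h : k ≤ t) :
    Submodule.span A {u ^ t} ≤ Submodule.span A {u ^ k} :=
  Submodule.span_le.mpr (Set.singleton_subset_iff.mpr (gen_pow_mem u k t h))

lemma gen_pow_shuffle (u v : A) (a b c e : ℕ) :
    u ^ a * (u ^ b * v * u ^ c) * u ^ e = u ^ (a + b) * v * u ^ (c + e) := by
  rw [pow_add, pow_add]
  simp only [mul_assoc]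

/-- `u^s * u * u^t = u^(s+t+1)` lies in the obvious ideal. -/
lemma gen_self (u : A) (s t : ℕ) :
    u ^ s * u * u ^ t ∈ Submodule.span A {u ^ (s + t + 1)} := by
  have e : u ^ s * u * u ^ t = u ^ (s + t + 1) := by
    rw [← pow_succ, ← pow_add, show s + 1 + t = s + t + 1 from by omega]
  rw [e]
  exact Submodule.mem_span_singleton_self _

/-- Key lemma: if `u, v` satisfy a Serre-type relation of degree `m` with leading
coefficient `1`, then `u^s v u^t` lies in the left ideal generated by `u^(s+t+1-m)`. -/
lemma gen_key (u v : A) (c : ℕ → ℂ) (m : ℕ)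
    (hrel : (∑ ν ∈ Finset.range (m + 1), c ν • (u ^ (m - ν) * v * u ^ ν)) = 0)
    (hc0 : c 0 = 1) (s t : ℕ) :
    u ^ s * v * u ^ t ∈ Submodule.span A {u ^ (s + t + 1 - m)} := by
  induction s using Nat.strong_induction_on generalizing t with
  | _ s ih =>
    by_cases hs : s < m
    · have hk : s + t + 1 - m ≤ t := by omega
      refine gen_span_le u _ t hk ?_
      rw [Submodule.mem_span_singleton]
      exact ⟨u ^ s * v, by rw [smul_eq_mul]⟩
    · have hms : m ≤ s := by omega
      have hser := hrel
      rw [Finset.sum_range_succ'] at hser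
      rw [hc0, one_smul, Nat.sub_zero, pow_zero, mul_one] at hser
      have hFm := eq_neg_of_add_eq_zero_right hser
      have h1 : u ^ s * v * u ^ t = u ^ (s - m) * (u ^ m * v) * u ^ t := by
        rw [← pow_sub_mul_pow u hms]
        simp only [mul_assoc]
      rw [h1, hFm]
      simp only [mul_neg, neg_mul, Finset.mul_sum, Finset.sum_mul]
      apply Submodule.neg_mem
      apply Submodule.sum_mem
      intro ν hν
      have hνm : ν < m := Finset.mem_range.mp hν
      simp only [mul_smul_comm, smul_mul_assoc]
      apply Submodule.smul_of_tower_mem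
      rw [gen_pow_shuffle, show s - m + (m - (ν + 1)) = s - (ν + 1) from by omega]
      have hstep := ih (s - (ν + 1)) (by omega) (ν + 1 + t)
      rwa [show s - (ν + 1) + (ν + 1 + t) + 1 - m = s + t + 1 - m from by omega] at hstep

/-- Main generic lemma: if every generator `g j` satisfies the key property, then for
every `b` in the subalgebra generated by the `g j` and every `K`, sufficiently high
powers of `u` push `b` into the left ideal generated by `u^K`. -/
lemma gen_main (u : A) {κ : Type*} (g : κ → A) (M : κ → ℕ)
    (hg : ∀ j, ∀ s t : ℕ, u ^ s * g j * u ^ t ∈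
      Submodule.span A {u ^ (s + t + 1 - M j)})
    (b : A) (hb : b ∈ Algebra.adjoin ℂ (Set.range g)) :
    ∀ K : ℕ, ∃ N₀ : ℕ, ∀ N, N₀ ≤ N → u ^ N * b ∈ Submodule.span A {u ^ K} := by
  induction hb using Algebra.adjoin_induction with
  | mem x hx =>
      obtain ⟨j, rfl⟩ := hx
      intro K
      refine ⟨K + M j, fun N hN => ?_⟩
      have h1 := hg j N 0
      rw [pow_zero, mul_one] at h1
      exact gen_span_le u K (N + 0 + 1 - M j) (by omega) h1
  | algebraMap r =>
      intro K
      refine ⟨K, fun N hN => ?_⟩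
      rw [← Algebra.commutes, ← smul_eq_mul]
      exact Submodule.smul_mem _ _ (gen_pow_mem u K N hN)
  | add x y hx hy hpx hpy =>
      intro K
      obtain ⟨Nx, hNx⟩ := hpx K
      obtain ⟨Ny, hNy⟩ := hpy K
      refine ⟨max Nx Ny, fun N hN => ?_⟩
      rw [mul_add]
      exact Submodule.add_mem _ (hNx N (by omega)) (hNy N (by omega))
  | mul x y hx hy hpx hpy =>
      intro K
      obtain ⟨Ky, hKy⟩ := hpy K
      obtain ⟨Nx, hNx⟩ := hpx Ky
      refine ⟨Nx, fun N hN => ?_⟩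
      rw [← mul_assoc]
      obtain ⟨cc, hcc⟩ := Submodule.mem_span_singleton.mp (hNx N hN)
      rw [← hcc, smul_eq_mul, mul_assoc, ← smul_eq_mul]
      exact Submodule.smul_mem _ cc (hKy Ky le_rfl)

end Generic

section AuxLemmas

variable (n : ℕ) (a : Fin n → Fin n → ℤ) (d : Fin n → ℤ) (q : ℂ)

/-- The Serre relation holds in the quotient. -/
lemma aux_serre (i j : Fin n) (h : i ≠ j) :
    (∑ ν ∈ Finset.range ((1 - a i j).toNat + 1),
      ((-1 : ℂ) ^ ν * (q ^ d i) ^ ((ν : ℤ) * ((ν : ℤ) - 1 + a i j)) *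
          qBinom q (d i) (1 - a i j) ν) •
        (fgenG n a d q i ^ ((1 - a i j).toNat - ν) * fgenG n a d q j *
          fgenG n a d q i ^ ν)) = 0 := by
  have h0 := RingQuot.mkAlgHom_rel ℂ (SerreRelG.serre (n := n) (a := a) (d := d) (q := q) i j h)
  simpa [fgenG, map_sum, map_smul, map_mul, map_pow] using h0

/-- Every element of the quotient lies in the subalgebra generated by the generators. -/
lemma aux_adjoin (b : UqMinusG n a d q) :
    b ∈ Algebra.adjoin ℂ (Set.range (fgenG n a d q)) := by
  have h1 : Set.range (fgenG n a d q) =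
      (RingQuot.mkAlgHom ℂ (SerreRelG n a d q)) '' (Set.range (ι ℂ)) := by
    rw [← Set.range_comp]; rfl
  have h2 : Algebra.adjoin ℂ (Set.range (fgenG n a d q)) = ⊤ := by
    rw [h1, ← AlgHom.map_adjoin, FreeAlgebra.adjoin_range_ι, Algebra.map_top,
      (AlgHom.range_eq_top _).mpr
        (RingQuot.mkAlgHom_surjective ℂ (SerreRelG n a d q))]
  rw [h2]
  trivial

end AuxLemmas

/-- for every generator `F_i` and every `b ∈ U_q⁻(g)` there is `N₀` such that
for all `N ≥ N₀`, `F_i^N b` lies in the left ideal `U_q⁻(g)·F_i`. -/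
theorem high_power_in_left_ideal
    (n : ℕ) (a : Fin n → Fin n → ℤ) (d : Fin n → ℤ)
    (hsym : ∀ i j, d i * a i j = d j * a j i) (hdpos : ∀ i, 0 < d i)
    (hdiag : ∀ i, a i i = 2) (hoff : ∀ i j, i ≠ j → a i j ≤ 0)
    (q : ℂ) (hq : q ≠ 0) (hq_not_root : ∀ k : ℕ, 0 < k → q ^ k ≠ 1)
    (i : Fin n) (b : UqMinusG n a d q) :
    ∃ N₀ : ℕ, ∀ N : ℕ, N₀ ≤ N →
      fgenG n a d q i ^ N * b ∈
        Submodule.span (UqMinusG n a d q) {fgenG n a d q i} := by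
  classical
  have hg : ∀ j, ∀ s t : ℕ,
      fgenG n a d q i ^ s * fgenG n a d q j * fgenG n a d q i ^ t ∈
        Submodule.span (UqMinusG n a d q)
          {fgenG n a d q i ^ (s + t + 1 - (if j = i then 0 else (1 - a i j).toNat))} := by
    intro j s t
    by_cases hj : j = i
    · rw [show s + t + 1 - (if j = i then 0 else (1 - a i j).toNat) = s + t + 1 from by
        simp [hj]]
      subst hj
      exact gen_self (fgenG n a d q j) s t
    · rw [show s + t + 1 - (if j = i then 0 else (1 - a i j).toNat) =
          s + t + 1 - (1 - a i j).toNat from by simp [hj]]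
      exact gen_key (fgenG n a d q i) (fgenG n a d q j) _ _
        (aux_serre n a d q i j (fun he => hj he.symm)) (by norm_num [qBinom, qFact]) s t
  obtain ⟨N₀, hN₀⟩ := gen_main (fgenG n a d q i) (fgenG n a d q)
    (fun j => if j = i then 0 else (1 - a i j).toNat) hg b (aux_adjoin n a d q b) 1
  refine ⟨N₀, fun N hN => ?_⟩
  have e : ({fgenG n a d q i ^ 1} : Set (UqMinusG n a d q)) = {fgenG n a d q i} := by
    rw [pow_one]
  rw [← e]
  exact hN₀ N hN

end
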